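/- arXiv:1009.5251 — 2 statements merged into one kernel-verified Lean document; each statement's English description precedes it below -/
import Mathlib

section
/- Let (Ω, 𝓕, P) be a probability space and let L ≥ 0 be a measurable function with ∫ L dP = 1 and ∫ L log L dP < ∞. For ε > 0 set L_ε = (L + ε)/(1 + ε). Then for any ε₀ > 0 the family { L_ε log L_ε : 0 < ε ≤ ε₀ } is uniformly integrable with respect to P. -/
open MeasureTheory

lemma pointwise_bound_smoothed (L ε : ℝ) (hL : 0 ≤ L) (hε : 0 < ε) :
    ‖((L + ε) / (1 + ε)) * Real.log ((L + ε) / (1 + ε))‖ ≤ ‖L * Real.log L‖ + 1 := by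
  set x := (L + ε) / (1 + ε) with hxdef
  have h1ε : (0:ℝ) < 1 + ε := by linarith
  have hx : 0 < x := div_pos (by linarith) h1ε
  have ha : (0:ℝ) ≤ 1 / (1 + ε) := by positivity
  have hb : (0:ℝ) ≤ ε / (1 + ε) := by positivity
  have hab : 1 / (1 + ε) + ε / (1 + ε) = 1 := by field_simp
  have hconv := Real.convexOn_mul_log.2 (Set.mem_Ici.2 hL) (Set.mem_Ici.2 zero_le_one)
    ha hb hab
  have hxeq : (1 / (1 + ε)) • L + (ε / (1 + ε)) • (1:ℝ) = x := by
    simp only [smul_eq_mul, mul_one, hxdef]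
    field_simp
  rw [hxeq] at hconv
  have hupper : x * Real.log x ≤ ‖L * Real.log L‖ := by
    have h1 : (1 / (1 + ε)) • (L * Real.log L) ≤ ‖L * Real.log L‖ := by
      rw [smul_eq_mul, Real.norm_eq_abs]
      calc 1 / (1 + ε) * (L * Real.log L) ≤ 1 / (1 + ε) * |L * Real.log L| :=
            mul_le_mul_of_nonneg_left (le_abs_self _) ha
        _ ≤ 1 * |L * Real.log L| := by
            apply mul_le_mul_of_nonneg_right _ (abs_nonneg _)
            rw [div_le_one h1ε]; linarith
        _ = |L * Real.log L| := one_mul _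
    calc x * Real.log x ≤ (1 / (1 + ε)) • (L * Real.log L)
            + (ε / (1 + ε)) • (1 * Real.log 1) := hconv
      _ = (1 / (1 + ε)) • (L * Real.log L) := by simp [Real.log_one]
      _ ≤ ‖L * Real.log L‖ := h1
  have hlower : -(x * Real.log x) ≤ 1 := by
    by_cases h1 : 1 ≤ x
    · have hlog := Real.log_nonneg h1
      nlinarith
    · push_neg at h1
      have hinv := Real.log_le_sub_one_of_pos (inv_pos.2 hx)
      rw [Real.log_inv] at hinv
      have hxx : x * x⁻¹ = 1 := mul_inv_cancel₀ hx.ne'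
      nlinarith [hx.le]
  rw [Real.norm_eq_abs, abs_le]
  constructor
  · have : (0:ℝ) ≤ ‖L * Real.log L‖ := norm_nonneg _
    linarith
  · linarith [norm_nonneg (L * Real.log L)]

/-- Let `L ≥ 0` with `∫ L dP = 1` and `∫ L log L dP < ∞` (i.e. `L log L` is `P`-integrable).
For `ε > 0` set `L_ε = (L + ε)/(1 + ε)`. Then for any `ε₀ > 0`, the family
`{ L_ε log L_ε : 0 < ε ≤ ε₀ }` is uniformly integrable with respect to `P`. -/
theorem uniformIntegrable_smoothed_LlogL
    {Ω : Type*} [MeasurableSpace Ω] (P : Measure Ω) [IsProbabilityMeasure P]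
    (L : Ω → ℝ) (hLm : Measurable L) (hL0 : ∀ ω, 0 ≤ L ω)
    (hL1 : (∫ ω, L ω ∂P) = 1)
    (hLlogL : Integrable (fun ω => L ω * Real.log (L ω)) P)
    (ε₀ : ℝ) (hε₀ : 0 < ε₀) :
    UniformIntegrable
      (fun (ε : Set.Ioc (0 : ℝ) ε₀) (ω : Ω) =>
        ((L ω + (ε : ℝ)) / (1 + (ε : ℝ))) * Real.log ((L ω + (ε : ℝ)) / (1 + (ε : ℝ))))
      1 P := by
  set f : Set.Ioc (0 : ℝ) ε₀ → Ω → ℝ := fun ε ω =>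
    ((L ω + (ε : ℝ)) / (1 + (ε : ℝ))) * Real.log ((L ω + (ε : ℝ)) / (1 + (ε : ℝ))) with hf
  set g : Ω → ℝ := fun ω => ‖L ω * Real.log (L ω)‖ + 1 with hg
  have hgint : Integrable g P := hLlogL.norm.add (integrable_const 1)
  have hgmem : MemLp g 1 P := (memLp_one_iff_integrable).2 hgint
  have hbound : ∀ (ε : Set.Ioc (0 : ℝ) ε₀) ω, ‖f ε ω‖ ≤ g ω := fun ε ω =>
    pointwise_bound_smoothed (L ω) ε (hL0 ω) ε.2.1
  have hgnonneg : ∀ ω, 0 ≤ g ω := fun ω => by positivity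
  have hmeas : ∀ ε : Set.Ioc (0 : ℝ) ε₀, Measurable (f ε) := by
    intro ε
    have h1 : Measurable fun ω => (L ω + (ε : ℝ)) / (1 + (ε : ℝ)) :=
      (hLm.add_const _).div_const _
    exact h1.mul (Real.measurable_log.comp h1)
  refine ⟨fun ε => (hmeas ε).aestronglyMeasurable, ?_, ?_⟩
  · intro δ hδ
    obtain ⟨η, hηpos, hη⟩ := hgmem.eLpNorm_indicator_le le_rfl ENNReal.one_ne_top hδ
    refine ⟨η, hηpos, fun ε s hs hμs => ?_⟩
    refine le_trans (eLpNorm_mono fun ω => ?_) (hη s hs hμs)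
    by_cases hω : ω ∈ s
    · simp only [Set.indicator_of_mem hω]
      calc ‖f ε ω‖ ≤ g ω := hbound ε ω
        _ ≤ ‖g ω‖ := le_abs_self _
    · simp [Set.indicator_of_notMem hω]
  · have hle : ∀ ε : Set.Ioc (0 : ℝ) ε₀, eLpNorm (f ε) 1 P ≤ eLpNorm g 1 P := by
      intro ε
      refine eLpNorm_mono fun ω => ?_
      calc ‖f ε ω‖ ≤ g ω := hbound ε ω
        _ ≤ ‖g ω‖ := le_abs_self _
    refine ⟨(eLpNorm g 1 P).toNNReal, fun ε => ?_⟩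
    refine (hle ε).trans ?_
    rw [ENNReal.coe_toNNReal hgmem.eLpNorm_ne_top]
end

section
/- Let d ≥ 2, γ > 0, let C = { x ∈ ℝ^d : x¹ < x² < ⋯ < x^d }, and define b : C → ℝ^d by b^i(x) = γ · Σ_{j ≠ i} 1/(x^i − x^j) for i = 1, …, d. Then b is dissipative on C: for all x, y ∈ C, Σ_{i=1}^d (b^i(x) − b^i(y)) (x^i − y^i) ≤ 0. -/
open Finset

lemma dyson_aux_pair (u v : ℝ) (h : 0 < u * v) : (u⁻¹ - v⁻¹) * (u - v) ≤ 0 := by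
  have hu : u ≠ 0 := by rintro rfl; simp at h
  have hv : v ≠ 0 := by rintro rfl; simp at h
  have e : (u⁻¹ - v⁻¹) * (u - v) = -((u - v) ^ 2 / (u * v)) := by
    field_simp; ring
  rw [e]
  have := div_nonneg (sq_nonneg (u - v)) h.le
  linarith

/-- The singular interaction drift `bⁱ(x) = γ · Σ_{j ≠ i} 1/(xⁱ − xʲ)` of the Dyson-type
SDE is dissipative on the Weyl chamber `C = {x : x¹ < ⋯ < x^d}`:
`Σ_i (bⁱ(x) − bⁱ(y)) (xⁱ − yⁱ) ≤ 0` for all `x, y ∈ C`. -/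
theorem dyson_drift_dissipative
    (d : ℕ) (hd : 2 ≤ d) (γ : ℝ) (hγ : 0 < γ)
    (b : (Fin d → ℝ) → (Fin d → ℝ))
    (hb : ∀ x : Fin d → ℝ, ∀ i : Fin d,
      b x i = γ * ∑ j ∈ Finset.univ.filter (fun j : Fin d => j ≠ i), (x i - x j)⁻¹)
    (x y : Fin d → ℝ) (hx : StrictMono x) (hy : StrictMono y) :
    ∑ i : Fin d, (b x i - b y i) * (x i - y i) ≤ 0 := by
  set f : Fin d → Fin d → ℝ :=
    fun i j => ((x i - x j)⁻¹ - (y i - y j)⁻¹) * (x i - y i) with hf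
  have hS : ∑ i : Fin d, (b x i - b y i) * (x i - y i)
      = γ * ∑ i : Fin d, ∑ j ∈ univ.filter (fun j : Fin d => j ≠ i), f i j := by
    rw [mul_sum]
    refine Finset.sum_congr rfl fun i _ => ?_
    rw [hb x i, hb y i, ← mul_sub, mul_assoc]
    congr 1
    rw [← Finset.sum_sub_distrib, Finset.sum_mul]
  have key : ∀ i j : Fin d, j ≠ i → f i j + f j i ≤ 0 := by
    intro i j hij
    have hpos : 0 < (x i - x j) * (y i - y j) := by
      rcases lt_or_gt_of_ne hij.symm with h | h
      · have h1 := hx h; have h2 := hy h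
        exact mul_pos_of_neg_of_neg (by linarith) (by linarith)
      · have h1 := hx h; have h2 := hy h
        exact mul_pos (by linarith) (by linarith)
    have hp := dyson_aux_pair (x i - x j) (y i - y j) hpos
    have e : f i j + f j i
        = ((x i - x j)⁻¹ - (y i - y j)⁻¹) * ((x i - x j) - (y i - y j)) := by
      simp only [hf]
      rw [show x j - x i = -(x i - x j) by ring, show y j - y i = -(y i - y j) by ring,
        inv_neg, inv_neg]
      ring
    linarith [e ▸ hp]
  have hswap : ∑ i : Fin d, ∑ j ∈ univ.filter (fun j : Fin d => j ≠ i), f j i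
      = ∑ i : Fin d, ∑ j ∈ univ.filter (fun j : Fin d => j ≠ i), f i j := by
    rw [Finset.sum_comm' (s' := fun j => univ.filter (fun i : Fin d => i ≠ j))
      (t' := (univ : Finset (Fin d)))]
    intro i j
    simp [ne_comm]
  have hSle : ∑ i : Fin d, ∑ j ∈ univ.filter (fun j : Fin d => j ≠ i), f i j ≤ 0 := by
    have h2 : 2 * (∑ i : Fin d, ∑ j ∈ univ.filter (fun j : Fin d => j ≠ i), f i j)
        = ∑ i : Fin d, ∑ j ∈ univ.filter (fun j : Fin d => j ≠ i), (f i j + f j i) := by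
      simp only [Finset.sum_add_distrib]
      rw [hswap]; ring
    have hle : ∑ i : Fin d, ∑ j ∈ univ.filter (fun j : Fin d => j ≠ i), (f i j + f j i) ≤ 0 :=
      Finset.sum_nonpos fun i _ => Finset.sum_nonpos fun j hj =>
        key i j (by simpa using hj)
    linarith
  rw [hS]
  exact mul_nonpos_of_nonneg_of_nonpos hγ.le hSle
end
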